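/- Let H be a real Hilbert space, F : H → ℝ Fréchet differentiable with gradient ∇F, and assume ∇F is monotone with constant c ≥ 0, i.e. ⟨∇F(x) − ∇F(y), x − y⟩ ≥ c‖x − y‖² for all x, y ∈ H. If u₁, u₂ : [0,∞) → H are differentiable with uᵢ'(l) = −∇F(uᵢ(l)) for every l ≥ 0, then ‖u₁(l) − u₂(l)‖ ≤ e^{−c l} ‖u₁(0) − u₂(0)‖ for every l ≥ 0; in particular, two gradient-flow solutions with the same initial datum coincide. (Contraction estimate and uniqueness, from the proof of Theorem 4.1.) -/

import Mathlib

open Set Real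

/-- Contraction estimate for gradient flows and uniqueness (from the proof of
Theorem 4.1): if `∇F` is monotone with constant `c ≥ 0`, then two gradient-flow
solutions satisfy `‖u₁(l) − u₂(l)‖ ≤ e^{−cl}‖u₁(0) − u₂(0)‖`; in particular two
solutions with the same initial datum coincide. -/
theorem gradient_flow_contraction
    {H : Type*} [NormedAddCommGroup H] [InnerProductSpace ℝ H] [CompleteSpace H]
    (F : H → ℝ) (gradF : H → H) (hF : ∀ u : H, HasGradientAt F (gradF u) u)
    (c : ℝ) (hc : 0 ≤ c)
    (hmono : ∀ x y : H, c * ‖x - y‖ ^ 2 ≤ (inner ℝ (gradF x - gradF y) (x - y) : ℝ))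
    (u₁ u₂ : ℝ → H)
    (hu₁ : ∀ l ∈ Set.Ici (0:ℝ), HasDerivWithinAt u₁ (-gradF (u₁ l)) (Set.Ici 0) l)
    (hu₂ : ∀ l ∈ Set.Ici (0:ℝ), HasDerivWithinAt u₂ (-gradF (u₂ l)) (Set.Ici 0) l) :
    (∀ l ∈ Set.Ici (0:ℝ),
        ‖u₁ l - u₂ l‖ ≤ Real.exp (-(c * l)) * ‖u₁ 0 - u₂ 0‖) ∧
      (u₁ 0 = u₂ 0 → Set.EqOn u₁ u₂ (Set.Ici 0)) := by
  set v : ℝ → H := fun l => u₁ l - u₂ l with hv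
  have hvd : ∀ l ∈ Ici (0:ℝ), HasDerivWithinAt v (gradF (u₂ l) - gradF (u₁ l)) (Ici 0) l := by
    intro l hl
    have := (hu₁ l hl).sub (hu₂ l hl)
    convert this using 1
    · rfl
    · abel
  set w : ℝ → H := fun l => Real.exp (c*l) • v l with hw
  have hwd : ∀ l ∈ Ici (0:ℝ), HasDerivWithinAt w
      ((c * Real.exp (c*l)) • v l + Real.exp (c*l) • (gradF (u₂ l) - gradF (u₁ l))) (Ici 0) l := by
    intro l hl
    have he : HasDerivWithinAt (fun l => Real.exp (c*l)) (c * Real.exp (c*l)) (Ici 0) l := by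
      have : HasDerivAt (fun l : ℝ => Real.exp (c*l)) (Real.exp (c*l) * (c * 1)) l :=
        HasDerivAt.exp ((hasDerivAt_id l).const_mul c)
      simpa [mul_comm] using this.hasDerivWithinAt
    rw [add_comm]
    exact he.smul (hvd l hl)
  set φ : ℝ → ℝ := fun l => (inner ℝ (w l) (w l) : ℝ) with hφ
  have hφd : ∀ l ∈ Ici (0:ℝ), HasDerivWithinAt φ
      ((inner ℝ (w l) ((c * Real.exp (c*l)) • v l + Real.exp (c*l) • (gradF (u₂ l) - gradF (u₁ l))) : ℝ)
        + (inner ℝ ((c * Real.exp (c*l)) • v l + Real.exp (c*l) • (gradF (u₂ l) - gradF (u₁ l))) (w l) : ℝ))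
      (Ici 0) l := by
    intro l hl
    exact (hwd l hl).inner ℝ (hwd l hl)
  have hderiv_nonpos : ∀ l ∈ Ici (0:ℝ),
      ((inner ℝ (w l) ((c * Real.exp (c*l)) • v l + Real.exp (c*l) • (gradF (u₂ l) - gradF (u₁ l))) : ℝ)
        + (inner ℝ ((c * Real.exp (c*l)) • v l + Real.exp (c*l) • (gradF (u₂ l) - gradF (u₁ l))) (w l) : ℝ)) ≤ 0 := by
    intro l _
    have hmono' := hmono (u₁ l) (u₂ l)
    have hsym : (inner ℝ (v l) (gradF (u₂ l) - gradF (u₁ l)) : ℝ)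
        = -(inner ℝ (gradF (u₁ l) - gradF (u₂ l)) (u₁ l - u₂ l) : ℝ) := by
      rw [show gradF (u₂ l) - gradF (u₁ l) = -(gradF (u₁ l) - gradF (u₂ l)) by abel,
        inner_neg_right, real_inner_comm]
    have hself : (inner ℝ (v l) (v l) : ℝ) = ‖u₁ l - u₂ l‖^2 := by
      simp [hv, real_inner_self_eq_norm_sq]
    have key : (inner ℝ (v l) ((c * Real.exp (c*l)) • v l + Real.exp (c*l) • (gradF (u₂ l) - gradF (u₁ l))) : ℝ) ≤ 0 := by
      rw [inner_add_right, real_inner_smul_right, real_inner_smul_right, hself, hsym]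
      have h1 : c * Real.exp (c*l) * ‖u₁ l - u₂ l‖^2
          ≤ Real.exp (c*l) * (inner ℝ (gradF (u₁ l) - gradF (u₂ l)) (u₁ l - u₂ l) : ℝ) := by
        have := mul_le_mul_of_nonneg_left hmono' (Real.exp_nonneg (c*l))
        linarith [this]
      linarith
    have hwv : (inner ℝ (w l) ((c * Real.exp (c*l)) • v l + Real.exp (c*l) • (gradF (u₂ l) - gradF (u₁ l))) : ℝ)
        = Real.exp (c*l) * (inner ℝ (v l) ((c * Real.exp (c*l)) • v l + Real.exp (c*l) • (gradF (u₂ l) - gradF (u₁ l))) : ℝ) := by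
      simp [hw, real_inner_smul_left]
    have hvw : (inner ℝ ((c * Real.exp (c*l)) • v l + Real.exp (c*l) • (gradF (u₂ l) - gradF (u₁ l))) (w l) : ℝ)
        = Real.exp (c*l) * (inner ℝ (v l) ((c * Real.exp (c*l)) • v l + Real.exp (c*l) • (gradF (u₂ l) - gradF (u₁ l))) : ℝ) := by
      rw [real_inner_comm]
      simp [hw, real_inner_smul_left]
    rw [hwv, hvw]
    nlinarith [Real.exp_nonneg (c*l)]
  have hanti : AntitoneOn φ (Ici 0) := by
    apply antitoneOn_of_deriv_nonpos (convex_Ici 0)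
    · intro l hl
      exact (hφd l hl).continuousWithinAt
    · rw [interior_Ici]
      intro l hl
      have := (hφd l (mem_Ici.mpr (le_of_lt hl))).hasDerivAt (Ici_mem_nhds hl)
      exact this.differentiableAt.differentiableWithinAt
    · rw [interior_Ici]
      intro l hl
      have hda := (hφd l (mem_Ici.mpr (le_of_lt hl))).hasDerivAt (Ici_mem_nhds hl)
      rw [hda.deriv]
      exact hderiv_nonpos l (mem_Ici.mpr (le_of_lt hl))
  have main : ∀ l ∈ Ici (0:ℝ), ‖u₁ l - u₂ l‖ ≤ Real.exp (-(c * l)) * ‖u₁ 0 - u₂ 0‖ := by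
    intro l hl
    have hle := hanti (self_mem_Ici) hl hl
    have hφl : φ l = (Real.exp (c*l) * ‖u₁ l - u₂ l‖)^2 := by
      rw [hφ]
      simp only [real_inner_self_eq_norm_sq, hw, norm_smul, Real.norm_eq_abs,
        abs_of_nonneg (Real.exp_nonneg _), hv]
    have hφ0 : φ 0 = ‖u₁ 0 - u₂ 0‖^2 := by
      simp [hφ, hw, real_inner_self_eq_norm_sq, hv]
    rw [hφl, hφ0] at hle
    have h1 : Real.exp (c*l) * ‖u₁ l - u₂ l‖ ≤ ‖u₁ 0 - u₂ 0‖ := by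
      have := Real.sqrt_le_sqrt hle
      rwa [Real.sqrt_sq (by positivity), Real.sqrt_sq (norm_nonneg _)] at this
    rw [Real.exp_neg]
    rw [inv_mul_eq_div, le_div_iff₀ (Real.exp_pos _)]
    linarith [h1]
  refine ⟨main, ?_⟩
  intro h0 l hl
  have := main l hl
  rw [h0, sub_self, norm_zero, mul_zero] at this
  have : ‖u₁ l - u₂ l‖ = 0 := le_antisymm this (norm_nonneg _)
  have := norm_sub_eq_zero_iff.mp this
  exact this
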